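/- Let G be a group, H ≤ G a subgroup, A a group, and μ : A^M → A a group homomorphism where M ⊆ H is finite. Let τ_G : A^G → A^G and τ_H : A^H → A^H be the cellular automata with local defining map μ. If τ_H is injective then τ_G is injective. -/
import Mathlib


/-- for a group homomorphism local defining map `μ : A^M → A`
with `M ⊆ H ≤ G`, if the induced cellular automaton over `H` is injective then
the induced cellular automaton over `G` is injective. -/
theorem stmt16 {G A : Type*} [Group G] [Group A] (H : Subgroup G)
    (M : Finset G) (hM : ∀ m ∈ M, m ∈ H)
    (μ : (M → A) → A) (hμ : ∀ u v : M → A, μ (u * v) = μ u * μ v)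
    (τG : (G → A) → (G → A)) (τH : (H → A) → (H → A))
    (hτG : ∀ (c : G → A) (g : G), τG c g = μ (fun m => c (g * m.1)))
    (hτH : ∀ (c : H → A) (h : H), τH c h = μ (fun m => c (h * ⟨m.1, hM m.1 m.2⟩)))
    (hinj : Function.Injective τH) : Function.Injective τG := by
  have hμ1 : μ 1 = 1 := by
    have := hμ 1 1
    simpa using this.symm
  have hμinv : ∀ v : M → A, μ v⁻¹ = (μ v)⁻¹ := by
    intro v
    have h : μ v * μ v⁻¹ = 1 := by
      rw [← hμ]; simpa using hμ1
    exact eq_inv_of_mul_eq_one_right h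
  intro c c' hcc'
  funext g
  -- define the configuration on H
  set e : H → A := fun h => c (g * h) * (c' (g * h))⁻¹ with he
  have hτe : τH e = τH 1 := by
    funext h
    rw [hτH, hτH]
    have : (fun m : M => (1 : H → A) (h * ⟨m.1, hM m.1 m.2⟩)) = (1 : M → A) := rfl
    rw [this, hμ1]
    have hval : (fun m : M => e (h * ⟨m.1, hM m.1 m.2⟩)) =
        (fun m : M => c (g * h * m.1)) * (fun m : M => c' (g * h * m.1))⁻¹ := by
      funext m
      simp only [he, Pi.mul_apply, Pi.inv_apply]
      congr 2 <;> push_cast <;> group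
    rw [hval, hμ, hμinv]
    have h1 : τG c (g * h) = τG c' (g * h) := by rw [hcc']
    rw [hτG, hτG] at h1
    rw [h1, mul_inv_cancel]
  have he1 : e = 1 := hinj hτe
  have := congrFun he1 1
  simp only [he, Pi.one_apply] at this
  have : c (g * ((1 : H) : G)) = c' (g * ((1 : H) : G)) := by
    exact mul_inv_eq_one.mp this
  simpa using this
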